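/- Let φ_f, p : ℝ³ → ℝ and v_s, v_f : ℝ³ → ℝ³ be differentiable at x ∈ ℝ³, let μ_f, μ_B, μ_D, κ ∈ ℝ with κ ≠ 0, and let Tᵉ be a symmetric 3×3 matrix. Set φ_s := 1 − φ_f, L_a := Dv_a(x) (the Fréchet derivative, identified with a 3×3 matrix), D_a := ½(L_a + L_aᵀ) for a = s, f, T_f := −p φ_f I + 2μ_f D_f + 2μ_B(D_f − D_s), T_s := −p φ_s I + Tᵉ + 2μ_B(D_s − D_f), and p_f := p ∇φ_f − (μ_D φ_f²/κ)(v_f − v_s), all evaluated at x. If div(φ_s v_s + φ_f v_f) = 0 at x, then ⟨T_f, L_f⟩ + ⟨T_s, L_s⟩ − ⟨p_f, v_f − v_s⟩ = ⟨Tᵉ, L_s⟩ + 2μ_f‖D_f‖² + 2μ_B‖D_f − D_s‖² + (μ_D φ_f²/κ)‖v_f − v_s‖², where ⟨A,B⟩ := trace(AᵀB) for matrices and the Euclidean inner product for vectors. -/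

import Mathlib

open RealInnerProductSpace

noncomputable section

/-- The divergence of a vector field on ℝ³: the trace of its Fréchet derivative. -/
def div3 (w : EuclideanSpace ℝ (Fin 3) → EuclideanSpace ℝ (Fin 3))
    (x : EuclideanSpace ℝ (Fin 3)) : ℝ :=
  LinearMap.trace ℝ (EuclideanSpace ℝ (Fin 3)) (fderiv ℝ w x).toLinearMap

/-- The Frobenius inner product `⟨A,B⟩ = trace(Aᵀ B)` of two linear operators on ℝ³
(the transpose realized as the adjoint). -/
def fip (A B : EuclideanSpace ℝ (Fin 3) →L[ℝ] EuclideanSpace ℝ (Fin 3)) : ℝ :=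
  LinearMap.trace ℝ (EuclideanSpace ℝ (Fin 3))
    ((ContinuousLinearMap.adjoint A).comp B).toLinearMap

namespace DissipAux

local notation "E3" => EuclideanSpace ℝ (Fin 3)

abbrev b : OrthonormalBasis (Fin 3) ℝ (EuclideanSpace ℝ (Fin 3)) :=
  EuclideanSpace.basisFun (Fin 3) ℝ

lemma trace_eq_sum (T : E3 →L[ℝ] E3) :
    LinearMap.trace ℝ E3 T.toLinearMap = ∑ i, ⟪b i, T (b i)⟫ := by
  rw [LinearMap.trace_eq_matrix_trace ℝ b.toBasis, Matrix.trace]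
  refine Finset.sum_congr rfl fun i _ => ?_
  rw [Matrix.diag_apply, LinearMap.toMatrix_apply, OrthonormalBasis.coe_toBasis_repr_apply,
    OrthonormalBasis.repr_apply_apply, OrthonormalBasis.coe_toBasis]
  rfl

lemma trace_smulRight (ℓ : E3 →L[ℝ] ℝ) (v : E3) :
    LinearMap.trace ℝ E3 (ℓ.smulRight v).toLinearMap = ℓ v := by
  rw [trace_eq_sum]
  conv_rhs => rw [← b.sum_repr v]
  rw [map_sum]
  refine Finset.sum_congr rfl fun i _ => ?_
  simp [OrthonormalBasis.repr_apply_apply, real_inner_smul_right, mul_comm]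

lemma fip_eq_sum (A B : E3 →L[ℝ] E3) :
    fip A B = ∑ i, ⟪A (b i), B (b i)⟫ := by
  rw [fip, trace_eq_sum]
  refine Finset.sum_congr rfl fun i _ => ?_
  rw [ContinuousLinearMap.comp_apply, ContinuousLinearMap.adjoint_inner_right]

lemma fip_add_left (A B C : E3 →L[ℝ] E3) : fip (A + B) C = fip A C + fip B C := by
  simp [fip_eq_sum, inner_add_left, Finset.sum_add_distrib]

lemma fip_add_right (A B C : E3 →L[ℝ] E3) : fip A (B + C) = fip A B + fip A C := by
  simp [fip_eq_sum, inner_add_right, Finset.sum_add_distrib]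

lemma fip_smul_left (c : ℝ) (A B : E3 →L[ℝ] E3) : fip (c • A) B = c * fip A B := by
  simp only [fip_eq_sum, ContinuousLinearMap.coe_smul', Pi.smul_apply, real_inner_smul_left,
    Finset.mul_sum]

lemma fip_smul_right (c : ℝ) (A B : E3 →L[ℝ] E3) : fip A (c • B) = c * fip A B := by
  simp only [fip_eq_sum, ContinuousLinearMap.coe_smul', Pi.smul_apply, real_inner_smul_right,
    Finset.mul_sum]

lemma fip_neg_left (A B : E3 →L[ℝ] E3) : fip (-A) B = -fip A B := by
  simp [fip_eq_sum, Finset.sum_neg_distrib]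

lemma fip_sub_right (A B C : E3 →L[ℝ] E3) : fip A (B - C) = fip A B - fip A C := by
  simp [fip_eq_sum, inner_sub_right, Finset.sum_sub_distrib]

lemma fip_id_left (B : E3 →L[ℝ] E3) :
    fip (ContinuousLinearMap.id ℝ E3) B = LinearMap.trace ℝ E3 B.toLinearMap := by
  simp [fip_eq_sum, trace_eq_sum]

lemma fip_adjoint_right (S M : E3 →L[ℝ] E3) (hS : ContinuousLinearMap.adjoint S = S) :
    fip S (ContinuousLinearMap.adjoint M) = fip S M := by
  have h1 : fip S (ContinuousLinearMap.adjoint M)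
      = LinearMap.trace ℝ E3 (M.comp S).toLinearMap := by
    rw [fip_eq_sum, trace_eq_sum]
    refine Finset.sum_congr rfl fun i _ => ?_
    rw [ContinuousLinearMap.adjoint_inner_right, ContinuousLinearMap.comp_apply,
      real_inner_comm]
  have h2 : fip S M = LinearMap.trace ℝ E3 (S.comp M).toLinearMap := by
    rw [fip_eq_sum, trace_eq_sum]
    refine Finset.sum_congr rfl fun i _ => ?_
    rw [ContinuousLinearMap.comp_apply]
    conv_rhs => rw [← hS]
    rw [ContinuousLinearMap.adjoint_inner_right]
  rw [h1, h2, ContinuousLinearMap.toLinearMap_comp, ContinuousLinearMap.toLinearMap_comp,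
    LinearMap.trace_comp_comm']

end DissipAux

/-- Pointwise interior dissipation identity for a saturated biphasic mixture of incompressible
constituents: if `div(φ_s v_s + φ_f v_f) = 0` at `x`, then
`⟨T_f, L_f⟩ + ⟨T_s, L_s⟩ − ⟨p_f, v_f − v_s⟩
  = ⟨Tᵉ, L_s⟩ + 2μ_f‖D_f‖² + 2μ_B‖D_f − D_s‖² + (μ_D φ_f²/κ)‖v_f − v_s‖²`. -/
theorem interior_dissipation_identity
    (φf p : EuclideanSpace ℝ (Fin 3) → ℝ)
    (vs vf : EuclideanSpace ℝ (Fin 3) → EuclideanSpace ℝ (Fin 3))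
    (x : EuclideanSpace ℝ (Fin 3))
    (hφf : DifferentiableAt ℝ φf x) (hp : DifferentiableAt ℝ p x)
    (hvs : DifferentiableAt ℝ vs x) (hvf : DifferentiableAt ℝ vf x)
    (μf μB μD κ : ℝ) (hκ : κ ≠ 0)
    (Te : EuclideanSpace ℝ (Fin 3) →L[ℝ] EuclideanSpace ℝ (Fin 3))
    (hTe : IsSelfAdjoint Te)
    (Ls Lf Ds Df Ts Tf : EuclideanSpace ℝ (Fin 3) →L[ℝ] EuclideanSpace ℝ (Fin 3))
    (hLs : Ls = fderiv ℝ vs x) (hLf : Lf = fderiv ℝ vf x)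
    (hDs : Ds = (1 / 2 : ℝ) • (Ls + ContinuousLinearMap.adjoint Ls))
    (hDf : Df = (1 / 2 : ℝ) • (Lf + ContinuousLinearMap.adjoint Lf))
    (hTf : Tf = -(p x * φf x) • (ContinuousLinearMap.id ℝ (EuclideanSpace ℝ (Fin 3)))
      + (2 * μf) • Df + (2 * μB) • (Df - Ds))
    (hTs : Ts = -(p x * (1 - φf x)) • (ContinuousLinearMap.id ℝ (EuclideanSpace ℝ (Fin 3)))
      + Te + (2 * μB) • (Ds - Df))
    (pf : EuclideanSpace ℝ (Fin 3))
    (hpf : pf = p x • gradient φf x - (μD * (φf x) ^ 2 / κ) • (vf x - vs x))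
    (hdiv : div3 (fun y => (1 - φf y) • vs y + φf y • vf y) x = 0) :
    fip Tf Lf + fip Ts Ls - ⟪pf, vf x - vs x⟫
      = fip Te Ls + 2 * μf * fip Df Df + 2 * μB * fip (Df - Ds) (Df - Ds)
        + (μD * (φf x) ^ 2 / κ) * ‖vf x - vs x‖ ^ 2 := by
  set d : EuclideanSpace ℝ (Fin 3) →L[ℝ] ℝ := fderiv ℝ φf x with hd
  -- the divergence constraint, expanded
  have h1 : DifferentiableAt ℝ (fun y => (1 - φf y) • vs y) x :=
    ((differentiableAt_const (1 : ℝ)).sub hφf).smul hvs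
  have h2 : DifferentiableAt ℝ (fun y => φf y • vf y) x := hφf.smul hvf
  have hconst : fderiv ℝ (fun y => 1 - φf y) x = -d := fderiv_const_sub 1
  have hder : fderiv ℝ (fun y => (1 - φf y) • vs y + φf y • vf y) x
      = ((1 - φf x) • fderiv ℝ vs x + ((-d).smulRight (vs x)))
        + (φf x • fderiv ℝ vf x + d.smulRight (vf x)) := by
    rw [fderiv_fun_add h1 h2, fderiv_fun_smul (hφf.const_sub (1 : ℝ)) hvs,
      fderiv_fun_smul hφf hvf, hconst]
  have hdiv' : (1 - φf x) * LinearMap.trace ℝ (EuclideanSpace ℝ (Fin 3)) Ls.toLinearMap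
      + φf x * LinearMap.trace ℝ (EuclideanSpace ℝ (Fin 3)) Lf.toLinearMap
      + (d (vf x) - d (vs x)) = 0 := by
    rw [div3, hder] at hdiv
    simp only [ContinuousLinearMap.coe_add, ContinuousLinearMap.coe_smul, map_add, map_smul,
      smul_eq_mul, DissipAux.trace_smulRight, ContinuousLinearMap.neg_apply] at hdiv
    rw [hLs, hLf]
    linarith [hdiv]
  -- the interaction-force term
  have hgrad : ⟪gradient φf x, vf x - vs x⟫ = d (vf x) - d (vs x) := by
    have : ⟪gradient φf x, vf x - vs x⟫ = (fderiv ℝ φf x) (vf x - vs x) := by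
      unfold gradient
      exact InnerProductSpace.toDual_symm_apply
    rw [this, map_sub, hd]
  have hinner : ⟪pf, vf x - vs x⟫
      = p x * (d (vf x) - d (vs x)) - μD * φf x ^ 2 / κ * ‖vf x - vs x‖ ^ 2 := by
    rw [hpf, inner_sub_left, real_inner_smul_left, real_inner_smul_left, hgrad,
      real_inner_self_eq_norm_sq]
  -- self-adjointness of the symmetric parts
  have hDs_sa : ContinuousLinearMap.adjoint Ds = Ds := by
    rw [hDs, map_smulₛₗ, map_add, ContinuousLinearMap.adjoint_adjoint]
    simp [add_comm]
  have hDf_sa : ContinuousLinearMap.adjoint Df = Df := by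
    rw [hDf, map_smulₛₗ, map_add, ContinuousLinearMap.adjoint_adjoint]
    simp [add_comm]
  have hK_sa : ContinuousLinearMap.adjoint (Df - Ds) = Df - Ds := by
    rw [map_sub, hDf_sa, hDs_sa]
  -- symmetric-part contractions
  have hDfLf : fip Df Df = fip Df Lf := by
    nth_rewrite 2 [hDf]
    rw [DissipAux.fip_smul_right, DissipAux.fip_add_right,
      DissipAux.fip_adjoint_right Df Lf hDf_sa]
    ring
  have hK : Df - Ds = (1 / 2 : ℝ) • ((Lf - Ls) + ContinuousLinearMap.adjoint (Lf - Ls)) := by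
    rw [hDf, hDs, map_sub]
    simp only [smul_add, smul_sub]
    abel
  have hKK : fip (Df - Ds) (Df - Ds) = fip (Df - Ds) Lf - fip (Df - Ds) Ls := by
    nth_rewrite 2 [hK]
    rw [DissipAux.fip_smul_right, DissipAux.fip_add_right,
      DissipAux.fip_adjoint_right _ _ hK_sa, DissipAux.fip_sub_right]
    ring
  -- expand the stresses
  have eTf : fip Tf Lf = -(p x * φf x) * LinearMap.trace ℝ (EuclideanSpace ℝ (Fin 3)) Lf.toLinearMap
      + 2 * μf * fip Df Lf + 2 * μB * fip (Df - Ds) Lf := by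
    rw [hTf, DissipAux.fip_add_left, DissipAux.fip_add_left, DissipAux.fip_smul_left,
      DissipAux.fip_smul_left, DissipAux.fip_smul_left, DissipAux.fip_id_left]
  have eTs : fip Ts Ls = -(p x * (1 - φf x)) * LinearMap.trace ℝ (EuclideanSpace ℝ (Fin 3)) Ls.toLinearMap
      + fip Te Ls - 2 * μB * fip (Df - Ds) Ls := by
    rw [hTs, DissipAux.fip_add_left, DissipAux.fip_add_left, DissipAux.fip_smul_left,
      DissipAux.fip_id_left, DissipAux.fip_smul_left,
      show Ds - Df = -(Df - Ds) from (neg_sub Df Ds).symm, DissipAux.fip_neg_left]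
    ring
  rw [eTf, eTs, hinner]
  linear_combination (-(p x)) * hdiv' - 2 * μf * hDfLf - 2 * μB * hKK
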